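/- Fano-type exponential bound: let Y be a discrete random variable taking finitely many values, F another random variable, and let P_e be the minimum error probability of predicting Y from F over all (possibly randomized) predictors. Then -log(1 - P_e) ≤ H(Y|F), and consequently P_e ≤ 1 - exp(-H(Y|F)). -/

import Mathlib

open Real Finset

variable {Ω : Type*} [Fintype Ω]

/-- Probability that a random variable `X` takes the value `a`, under pmf `p`. -/
noncomputable def probOf (p : Ω → ℝ) {α : Type*} [Fintype α] [DecidableEq α]
    (X : Ω → α) (a : α) : ℝ := ∑ ω, if X ω = a then p ω else 0

/-- Shannon entropy (in nats) of a discrete random variable. -/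
noncomputable def entropy (p : Ω → ℝ) {α : Type*} [Fintype α] [DecidableEq α]
    (X : Ω → α) : ℝ := -∑ a, probOf p X a * Real.log (probOf p X a)

/-- Mutual information `I(X;Y) = H(X) + H(Y) - H(X,Y)`. -/
noncomputable def mutualInfo (p : Ω → ℝ) {α β : Type*} [Fintype α] [DecidableEq α]
    [Fintype β] [DecidableEq β] (X : Ω → α) (Y : Ω → β) : ℝ :=
  entropy p X + entropy p Y - entropy p (fun ω => (X ω, Y ω))

/-- Conditional entropy `H(X|Z) = H(X,Z) - H(Z)`. -/
noncomputable def condEntropy (p : Ω → ℝ) {α γ : Type*} [Fintype α] [DecidableEq α]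
    [Fintype γ] [DecidableEq γ] (X : Ω → α) (Z : Ω → γ) : ℝ :=
  entropy p (fun ω => (X ω, Z ω)) - entropy p Z

/-- Conditional mutual information
`I(X;Y|Z) = H(X,Z) + H(Y,Z) - H(X,Y,Z) - H(Z)`. -/
noncomputable def condMutualInfo (p : Ω → ℝ) {α β γ : Type*} [Fintype α] [DecidableEq α]
    [Fintype β] [DecidableEq β] [Fintype γ] [DecidableEq γ]
    (X : Ω → α) (Y : Ω → β) (Z : Ω → γ) : ℝ :=
  entropy p (fun ω => (X ω, Z ω)) + entropy p (fun ω => (Y ω, Z ω))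
    - entropy p (fun ω => (X ω, Y ω, Z ω)) - entropy p Z

/-- `p` is a probability mass function on the finite sample space `Ω`. -/
def IsProbMass (p : Ω → ℝ) : Prop := (∀ ω, 0 ≤ p ω) ∧ ∑ ω, p ω = 1

/-- Bayes error rate of predicting `Y` from `F`:
`P_e = 1 - ∑_f max_y P(Y = y, F = f)`. -/
noncomputable def bayesError (p : Ω → ℝ) {α β : Type*} [Fintype α] [DecidableEq α]
    [Nonempty α] [Fintype β] [DecidableEq β] (Y : Ω → α) (F : Ω → β) : ℝ :=
  1 - ∑ f : β, Finset.univ.sup' Finset.univ_nonempty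
      (fun y : α => probOf p (fun ω => (Y ω, F ω)) (y, f))

/-- Fano-type (Feder–Merhav) exponential bound:
`-log(1 - P_e) ≤ H(Y|F)` and hence `P_e ≤ 1 - exp(-H(Y|F))`. -/
theorem feder_merhav_bound
    {α β : Type*} [Fintype α] [DecidableEq α] [Nonempty α]
    [Fintype β] [DecidableEq β]
    (p : Ω → ℝ) (hp : IsProbMass p) (Y : Ω → α) (F : Ω → β) :
    -Real.log (1 - bayesError p Y F) ≤ condEntropy p Y F ∧
      bayesError p Y F ≤ 1 - Real.exp (-(condEntropy p Y F)) := by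
  classical
  obtain ⟨hp0, hp1⟩ := hp
  set q : α → β → ℝ := fun y f => probOf p (fun ω => (Y ω, F ω)) (y, f) with hqdef
  set r : β → ℝ := fun f => probOf p F f with hrdef
  set m : β → ℝ := fun f =>
    Finset.univ.sup' Finset.univ_nonempty (fun y : α => q y f) with hmdef
  set M : ℝ := ∑ f, m f with hMdef
  have hq0 : ∀ y f, 0 ≤ q y f := by
    intro y f
    apply Finset.sum_nonneg
    intro ω _
    split <;> simp [hp0 ω]
  have hqm : ∀ y f, q y f ≤ m f := by
    intro y f
    exact Finset.le_sup' (fun y => q y f) (Finset.mem_univ y)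
  have hm0 : ∀ f, 0 ≤ m f :=
    fun f => le_trans (hq0 (Classical.arbitrary α) f) (hqm _ f)
  have hmarg : ∀ f, ∑ y, q y f = r f := by
    intro f
    simp only [hqdef, hrdef, probOf, Prod.mk.injEq]
    rw [Finset.sum_comm]
    refine Finset.sum_congr rfl fun ω _ => ?_
    by_cases h : F ω = f
    · simp [h]
    · simp [h]
  have hr0 : ∀ f, 0 ≤ r f := by
    intro f
    rw [← hmarg f]
    exact Finset.sum_nonneg fun y _ => hq0 y f
  have hmr : ∀ f, m f ≤ r f := by
    intro f
    rw [← hmarg f]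
    exact Finset.sup'_le _ _ fun y _ =>
      Finset.single_le_sum (fun y _ => hq0 y f) (Finset.mem_univ y)
  have hr1 : ∑ f, r f = 1 := by
    simp only [hrdef, probOf]
    rw [Finset.sum_comm]
    rw [← hp1]
    refine Finset.sum_congr rfl fun ω _ => ?_
    simp
  have hmpos : ∀ f, 0 < r f → 0 < m f := by
    intro f hf
    by_contra h
    push_neg at h
    have hm0' : m f = 0 := le_antisymm h (hm0 f)
    have : r f = 0 := by
      rw [← hmarg f]
      refine Finset.sum_eq_zero fun y _ => le_antisymm (hm0' ▸ hqm y f) (hq0 y f)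
    linarith
  have hMpos : 0 < M := by
    have : ∃ f, 0 < r f := by
      by_contra h
      push_neg at h
      have : (∑ f, r f) ≤ 0 := Finset.sum_nonpos fun f _ => h f
      rw [hr1] at this; linarith
    obtain ⟨f, hf⟩ := this
    have h1 : m f ≤ M :=
      Finset.single_le_sum (fun g _ => hm0 g) (Finset.mem_univ f)
    exact lt_of_lt_of_le (hmpos f hf) h1
  have hbe : 1 - bayesError p Y F = M := by
    simp only [bayesError, hMdef, hmdef, hqdef]
    ring
  -- termwise bound for the log-sum step
  have hterm : ∀ f, r f * Real.log (m f) - r f * Real.log (r f)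
      ≤ m f / M - r f + r f * Real.log M := by
    intro f
    rcases eq_or_lt_of_le (hr0 f) with h | h
    · have hrf : r f = 0 := h.symm
      have hmf : m f = 0 := le_antisymm (hrf ▸ hmr f) (hm0 f)
      simp [hrf, hmf]
    · have hmf : 0 < m f := hmpos f h
      have hlog := Real.log_le_sub_one_of_pos
        (div_pos hmf (mul_pos hMpos h))
      have heq : Real.log (m f / (M * r f))
          = Real.log (m f) - Real.log M - Real.log (r f) := by
        rw [Real.log_div (ne_of_gt hmf) (ne_of_gt (mul_pos hMpos h)),
          Real.log_mul (ne_of_gt hMpos) (ne_of_gt h)]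
        ring
      rw [heq] at hlog
      have hmul := mul_le_mul_of_nonneg_left hlog (le_of_lt h)
      have hfe : r f * (m f / (M * r f)) = m f / M := by
        field_simp
      nlinarith [hmul, hfe]
  have key : ∑ f, (r f * Real.log (m f) - r f * Real.log (r f)) ≤ Real.log M := by
    calc ∑ f, (r f * Real.log (m f) - r f * Real.log (r f))
        ≤ ∑ f, (m f / M - r f + r f * Real.log M) :=
          Finset.sum_le_sum fun f _ => hterm f
      _ = (∑ f, m f) / M - (∑ f, r f) + (∑ f, r f) * Real.log M := by
          rw [Finset.sum_add_distrib, Finset.sum_sub_distrib, Finset.sum_div,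
            Finset.sum_mul]
      _ = Real.log M := by
          rw [← hMdef, hr1, div_self (ne_of_gt hMpos)]; ring
  -- step 1 : joint entropy sum bounded by ∑ r f log (m f)
  have step1 : ∑ a : α × β, q a.1 a.2 * Real.log (q a.1 a.2)
      ≤ ∑ f, r f * Real.log (m f) := by
    rw [Fintype.sum_prod_type]
    rw [Finset.sum_comm]
    refine Finset.sum_le_sum fun f _ => ?_
    calc ∑ y, q y f * Real.log (q y f)
        ≤ ∑ y, q y f * Real.log (m f) := by
          refine Finset.sum_le_sum fun y _ => ?_
          rcases eq_or_lt_of_le (hq0 y f) with h | h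
          · simp [← h]
          · exact mul_le_mul_of_nonneg_left
              (Real.log_le_log h (hqm y f)) (hq0 y f)
      _ = r f * Real.log (m f) := by rw [← Finset.sum_mul, hmarg f]
  have hcond : condEntropy p Y F
      = -(∑ a : α × β, q a.1 a.2 * Real.log (q a.1 a.2))
        + ∑ f, r f * Real.log (r f) := by
    simp only [condEntropy, entropy, hqdef, hrdef]
    ring
  have hmain : -Real.log M ≤ condEntropy p Y F := by
    rw [hcond]
    have : ∑ f, (r f * Real.log (m f) - r f * Real.log (r f))
        = ∑ f, r f * Real.log (m f) - ∑ f, r f * Real.log (r f) := by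
      rw [Finset.sum_sub_distrib]
    linarith [key, step1, this ▸ key]
  constructor
  · rw [hbe]; exact hmain
  · have h1 : -(condEntropy p Y F) ≤ Real.log M := by linarith
    have h2 : Real.exp (-(condEntropy p Y F)) ≤ M := by
      calc Real.exp (-(condEntropy p Y F)) ≤ Real.exp (Real.log M) :=
            Real.exp_le_exp.mpr h1
        _ = M := Real.exp_log hMpos
    linarith
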